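/- Parallel rollout improves over every heuristic in a pool: let Π be a nonempty finite set of policies and define φ k s = the minimum over πb ∈ Π of V πb k s. Let σ be a nonstationary policy such that for every k and every state s, the action σ (k+1) s minimizes a ↦ g s a + φ k (f s a) over adm s. Then for every horizon k and every state s, J σ k s ≤ φ k s; in particular, the rollout policy performs no worse than every individual policy in the pool Π from every state. -/

import Mathlib

/-- k-step cost of a stationary policy `π`:
`V π 0 s = 0` and `V π (k+1) s = g s (π s) + V π k (f s (π s))`. -/
def polCost {S A : Type*} (f : S → A → S) (g : S → A → ℝ) (π : S → A) : ℕ → S → ℝ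
  | 0 => fun _ => 0
  | k + 1 => fun s => g s (π s) + polCost f g π k (f s (π s))

/-- Cost of a nonstationary policy `σ`:
`J σ 0 s = 0` and `J σ (k+1) s = g s (σ (k+1) s) + J σ k (f s (σ (k+1) s))`. -/
def nonstatCost {S A : Type*} (f : S → A → S) (g : S → A → ℝ) (σ : ℕ → S → A) : ℕ → S → ℝ
  | 0 => fun _ => 0
  | k + 1 => fun s => g s (σ (k + 1) s) + nonstatCost f g σ k (f s (σ (k + 1) s))

/-- Pointwise minimum of the k-step costs over a nonempty finite pool of policies:
`φ k s = min_{πb ∈ Pool} V πb k s`. -/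
noncomputable def poolMin {S A : Type*} (f : S → A → S) (g : S → A → ℝ)
    (Pool : Finset (S → A)) (hPool : Pool.Nonempty) (k : ℕ) (s : S) : ℝ :=
  Pool.inf' hPool fun πb => polCost f g πb k s

/-- Parallel rollout improves over every heuristic in the pool. -/
theorem parallel_rollout_improvement
    {S A : Type*} (adm : S → Finset A) (hadm : ∀ s, (adm s).Nonempty)
    (f : S → A → S) (g : S → A → ℝ) (hg : ∀ s a, 0 ≤ g s a)
    (Pool : Finset (S → A)) (hPool : Pool.Nonempty)
    (hPoolPol : ∀ πb ∈ Pool, ∀ s, πb s ∈ adm s)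
    (σ : ℕ → S → A) (hσ : ∀ k s, σ k s ∈ adm s)
    (hmin : ∀ k s, ∀ a ∈ adm s,
      g s (σ (k + 1) s) + poolMin f g Pool hPool k (f s (σ (k + 1) s))
        ≤ g s a + poolMin f g Pool hPool k (f s a)) :
    ∀ k s, nonstatCost f g σ k s ≤ poolMin f g Pool hPool k s := by
  intro k
  induction k with
  | zero =>
    intro s
    simp only [nonstatCost, poolMin]
    obtain ⟨π, hπ⟩ := hPool
    exact Finset.le_inf' _ _ fun πb _ => le_refl 0
  | succ k ih =>
    intro s
    apply Finset.le_inf'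
    intro πb hπb
    have h1 : nonstatCost f g σ (k+1) s
        ≤ g s (σ (k+1) s) + poolMin f g Pool hPool k (f s (σ (k+1) s)) := by
      simp only [nonstatCost]
      exact add_le_add le_rfl (ih _)
    have h2 := hmin k s (πb s) (hPoolPol πb hπb s)
    have h3 : poolMin f g Pool hPool k (f s (πb s)) ≤ polCost f g πb k (f s (πb s)) :=
      Finset.inf'_le _ hπb
    calc nonstatCost f g σ (k+1) s
        ≤ g s (πb s) + poolMin f g Pool hPool k (f s (πb s)) := h1.trans h2
      _ ≤ g s (πb s) + polCost f g πb k (f s (πb s)) := add_le_add le_rfl h3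
      _ = polCost f g πb (k+1) s := rfl
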